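/- Let B be a regular Bourgain system of dimension d on a finite abelian group G with uniform measure β on B₁, and κ > 0. If γ ∈ Ĝ satisfies |β̂(γ)| ≥ κ, then |1 − γ(x)| ≤ 2⁴ d κ⁻¹ η for all x ∈ B_η, where β̂(γ) := ∫ γ̄ dβ. -/

import Mathlib

open Finset

/-- A Bourgain system of dimension `d` on a finite abelian group `G`: a family
`(B ρ)_{ρ ∈ (0,2]}` of subsets satisfying nesting, containing `0`, symmetry, addition and
`2^d`-doubling. -/
def IsBourgainSystem {G : Type*} [AddCommGroup G] [Fintype G] (B : ℝ → Finset G) (d : ℝ) :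
    Prop :=
  (∀ ρ ρ' : ℝ, 0 < ρ' → ρ' ≤ ρ → ρ ≤ 2 → B ρ' ⊆ B ρ) ∧
  (∀ ρ : ℝ, 0 < ρ → ρ ≤ 2 → (0 : G) ∈ B ρ) ∧
  (∀ ρ : ℝ, 0 < ρ → ρ ≤ 2 → ∀ x ∈ B ρ, -x ∈ B ρ) ∧
  (∀ ρ ρ' : ℝ, 0 < ρ → 0 < ρ' → ρ + ρ' ≤ 1 →
    ∀ x ∈ B ρ, ∀ y ∈ B ρ', x + y ∈ B (ρ + ρ')) ∧
  (∀ ρ : ℝ, 0 < ρ → ρ ≤ 1 → ∃ X : Finset G, (X.card : ℝ) ≤ (2 : ℝ) ^ d ∧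
    ∀ y ∈ B (2 * ρ), ∃ x ∈ X, y - x ∈ B ρ)

/-- The density `μ_G(B) = μ_G(B₁)` of a Bourgain system. -/
noncomputable def bsDensity {G : Type*} [AddCommGroup G] [Fintype G] (B : ℝ → Finset G) : ℝ :=
  ((B 1).card : ℝ) / (Fintype.card G : ℝ)

/-- A Bourgain system of dimension `d` is regular if
`1 - 8d|η| ≤ μ_G(B₁)/μ_G(B_{1+η}) ≤ 1 + 8d|η|` whenever `d|η| ≤ 1/8`. -/
def IsRegularBS {G : Type*} [AddCommGroup G] [Fintype G] (B : ℝ → Finset G) (d : ℝ) : Prop :=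
  ∀ η : ℝ, d * |η| ≤ 1 / 8 →
    1 - 8 * d * |η| ≤ ((B 1).card : ℝ) / ((B (1 + η)).card : ℝ) ∧
    ((B 1).card : ℝ) / ((B (1 + η)).card : ℝ) ≤ 1 + 8 * d * |η|

/-- For a regular Bourgain system of dimension `d` with uniform measure `β` on `B₁` and
`κ > 0`: if a character `γ` has `|β̂(γ)| ≥ κ`, then `|1 - γ(x)| ≤ 2⁴ d κ⁻¹ η` for all
`x ∈ B_η`. -/
theorem stmt10 {G : Type*} [AddCommGroup G] [Fintype G] (B : ℝ → Finset G) (d : ℝ)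
    (hd : 1 ≤ d) (hB : IsBourgainSystem B d) (hreg : IsRegularBS B d)
    (κ : ℝ) (hκ : 0 < κ) (γ : AddChar G ℂ)
    (hγ : κ ≤ ‖(∑ u ∈ B 1, (starRingEnd ℂ) (γ u)) / ((B 1).card : ℂ)‖) :
    ∀ η : ℝ, 0 < η → η ≤ 2 → ∀ x ∈ B η,
      ‖1 - γ x‖ ≤ 2 ^ 4 * d * κ⁻¹ * η := by
  classical
  intro η hη0 hη2 x hx
  have habsγ : ∀ u : G, ‖γ u‖ = 1 := fun u => γ.norm_apply u
  have h0A : (0 : G) ∈ B 1 := hB.2.1 1 one_pos one_le_two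
  have hA0 : 0 < ((B 1).card : ℝ) := by
    exact_mod_cast Finset.card_pos.2 ⟨0, h0A⟩
  -- κ ≤ 1
  have hβle : ‖(∑ u ∈ B 1, (starRingEnd ℂ) (γ u)) / ((B 1).card : ℂ)‖ ≤ 1 := by
    rw [norm_div]
    have h1 : ‖∑ u ∈ B 1, (starRingEnd ℂ) (γ u)‖ ≤ ((B 1).card : ℝ) := by
      calc ‖∑ u ∈ B 1, (starRingEnd ℂ) (γ u)‖
          ≤ ∑ u ∈ B 1, ‖(starRingEnd ℂ) (γ u)‖ := by
            exact norm_sum_le _ _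
        _ = ((B 1).card : ℝ) := by
            simp [Complex.norm_conj, habsγ]
    have h2 : ‖((B 1).card : ℂ)‖ = ((B 1).card : ℝ) := by
      simp
    rw [h2, div_le_one hA0]
    exact h1
  have hκ1 : κ ≤ 1 := hγ.trans hβle
  have hκinv : 1 ≤ κ⁻¹ := (one_le_inv₀ hκ).2 hκ1
  have htriv : ‖1 - γ x‖ ≤ 2 := by
    calc ‖1 - γ x‖ ≤ ‖(1:ℂ)‖ + ‖γ x‖ := by
          exact norm_sub_le _ _
      _ = 2 := by rw [habsγ]; norm_num
  by_cases hcase : d * η ≤ 1 / 8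
  case neg =>
    push_neg at hcase
    have : (2:ℝ) ≤ 2 ^ 4 * d * κ⁻¹ * η := by
      nlinarith [mul_le_mul_of_nonneg_left hκinv (le_of_lt (by nlinarith : (0:ℝ) < d * η))]
    linarith
  case pos =>
    have hη8 : η ≤ 1 / 8 := by nlinarith
    have hη1 : 0 < 1 - η := by linarith
    -- sets
    set A := B 1 with hA
    set C := B (1 - η) with hC
    set A' := A.image (· + x) with hA'
    have hCA : C ⊆ A := hB.1 1 (1 - η) hη1 (by linarith) one_le_two
    have hCA' : C ⊆ A' := by
      intro v hv
      rw [hA', Finset.mem_image]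
      refine ⟨v + -x, ?_, by abel⟩
      have hxneg : -x ∈ B η := hB.2.2.1 η hη0 hη2 x hx
      have := hB.2.2.2.1 (1 - η) η hη1 hη0 (by linarith) v hv (-x) hxneg
      rwa [sub_add_cancel] at this
    have hC0 : (0 : G) ∈ C := hB.2.1 (1 - η) hη1 (by linarith)
    have hC0' : 0 < ((C.card : ℝ)) := by exact_mod_cast Finset.card_pos.2 ⟨0, hC0⟩
    -- regularity at -η
    have hregη := (hreg (-η) (by rwa [abs_neg, abs_of_pos hη0])).2
    rw [abs_neg, abs_of_pos hη0] at hregη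
    have h1η : (1 : ℝ) + -η = 1 - η := by ring
    rw [h1η] at hregη
    have hAC : ((A.card : ℝ)) - (C.card : ℝ) ≤ 8 * d * η * (A.card : ℝ) := by
      have h1 : ((A.card : ℝ)) ≤ (1 + 8 * d * η) * (C.card : ℝ) := by
        rw [div_le_iff₀ hC0'] at hregη
        linarith
      have h2 : (C.card : ℝ) ≤ (A.card : ℝ) := by
        exact_mod_cast Finset.card_le_card hCA
      nlinarith [hη0.le, hd]
    -- sums
    set T := ∑ u ∈ A, (starRingEnd ℂ) (γ u) with hT
    have hS : ∑ u ∈ A', (starRingEnd ℂ) (γ u) = (starRingEnd ℂ) (γ x) * T := by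
      rw [hA', Finset.sum_image (by intro a _ b _ h; exact add_right_cancel h)]
      rw [hT, Finset.mul_sum]
      refine Finset.sum_congr rfl fun u _ => ?_
      rw [← map_mul, ← AddChar.map_add_eq_mul, add_comm]
    have hdiff : T - (starRingEnd ℂ) (γ x) * T =
        (∑ u ∈ A \ A', (starRingEnd ℂ) (γ u)) - ∑ u ∈ A' \ A, (starRingEnd ℂ) (γ u) := by
      rw [← hS, Finset.sum_sdiff_sub_sum_sdiff]
    have hcard1 : ((A \ A').card : ℝ) ≤ (A.card : ℝ) - (C.card : ℝ) := by
      have : (A \ A').card ≤ (A \ C).card :=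
        Finset.card_le_card (Finset.sdiff_subset_sdiff Finset.Subset.rfl hCA')
      have h2 : (A \ C).card = A.card - C.card := Finset.card_sdiff_of_subset hCA
      have h3 : C.card ≤ A.card := Finset.card_le_card hCA
      calc ((A \ A').card : ℝ) ≤ ((A \ C).card : ℝ) := by exact_mod_cast this
        _ = (A.card : ℝ) - (C.card : ℝ) := by rw [h2, Nat.cast_sub h3]
    have hcardA' : A'.card = A.card := Finset.card_image_of_injective _ (add_left_injective x)
    have hcard2 : ((A' \ A).card : ℝ) ≤ (A.card : ℝ) - (C.card : ℝ) := by
      have : (A' \ A).card ≤ (A' \ C).card :=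
        Finset.card_le_card (Finset.sdiff_subset_sdiff Finset.Subset.rfl hCA)
      have h2 : (A' \ C).card = A'.card - C.card := Finset.card_sdiff_of_subset hCA'
      have h3 : C.card ≤ A'.card := Finset.card_le_card hCA'
      calc ((A' \ A).card : ℝ) ≤ ((A' \ C).card : ℝ) := by exact_mod_cast this
        _ = (A.card : ℝ) - (C.card : ℝ) := by
            rw [h2, Nat.cast_sub h3, hcardA']
    have hbound : ‖T - (starRingEnd ℂ) (γ x) * T‖ ≤
        2 * (8 * d * η) * (A.card : ℝ) := by
      rw [hdiff]
      have hb : ∀ s : Finset G, ‖∑ u ∈ s, (starRingEnd ℂ) (γ u)‖ ≤ (s.card : ℝ) := by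
        intro s
        calc ‖∑ u ∈ s, (starRingEnd ℂ) (γ u)‖
            ≤ ∑ u ∈ s, ‖(starRingEnd ℂ) (γ u)‖ := norm_sum_le _ _
          _ = (s.card : ℝ) := by simp [Complex.norm_conj, habsγ]
      calc ‖(∑ u ∈ A \ A', (starRingEnd ℂ) (γ u)) - ∑ u ∈ A' \ A, (starRingEnd ℂ) (γ u)‖
          ≤ ‖∑ u ∈ A \ A', (starRingEnd ℂ) (γ u)‖ +
            ‖∑ u ∈ A' \ A, (starRingEnd ℂ) (γ u)‖ := norm_sub_le _ _
        _ ≤ ((A \ A').card : ℝ) + ((A' \ A).card : ℝ) := add_le_add (hb _) (hb _)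
        _ ≤ 2 * (8 * d * η) * (A.card : ℝ) := by linarith
    -- |T| ≥ κ * |A|
    have hTlow : κ * (A.card : ℝ) ≤ ‖T‖ := by
      have : ‖T / ((A.card : ℕ) : ℂ)‖ = ‖T‖ / (A.card : ℝ) := by
        rw [norm_div]; simp
      rw [this] at hγ
      rw [le_div_iff₀ hA0] at hγ
      linarith
    have hTpos : 0 < ‖T‖ := lt_of_lt_of_le (by positivity) hTlow
    have hfact : ‖T - (starRingEnd ℂ) (γ x) * T‖ =
        ‖T‖ * ‖1 - γ x‖ := by
      have : T - (starRingEnd ℂ) (γ x) * T = T * (1 - (starRingEnd ℂ) (γ x)) := by ring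
      rw [this, norm_mul]
      congr 1
      rw [← Complex.norm_conj (1 - (starRingEnd ℂ) (γ x))]
      congr 1
      rw [map_sub, map_one, Complex.conj_conj]
    rw [hfact] at hbound
    have key : ‖1 - γ x‖ ≤ 2 * (8 * d * η) * (A.card : ℝ) / (κ * (A.card : ℝ)) := by
      rw [le_div_iff₀ (by positivity)]
      calc ‖1 - γ x‖ * (κ * (A.card : ℝ))
          ≤ ‖1 - γ x‖ * ‖T‖ := by
            exact mul_le_mul_of_nonneg_left hTlow (norm_nonneg _)
        _ = ‖T‖ * ‖1 - γ x‖ := mul_comm _ _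
        _ ≤ 2 * (8 * d * η) * (A.card : ℝ) := hbound
    calc ‖1 - γ x‖ ≤ 2 * (8 * d * η) * (A.card : ℝ) / (κ * (A.card : ℝ)) := key
      _ = 2 ^ 4 * d * κ⁻¹ * η := by
          field_simp
          ring
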